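/- Fix an integer n ≥ 1. For every homogeneous y ∈ p(n) of parity q (i.e. q = 0 and y ∈ p(n)₀, or q = 1 and y ∈ p(n)₁), the following identity holds in M_{2n}(ℂ) ⊗ M_{2n}(ℂ): Σ_{x ∈ 𝒳} ( [y, x] ⊗ x* + (−1)^{q·x̄} x ⊗ [y, x*] ) = 0, where x̄ is the parity of x (the A⁻_{ij} have parity 0, the B⁺_{ij} and C⁻_{ij} have parity 1), x* is the dual basis element of x, and the superbracket of homogeneous matrices u, v of parities ū, v̄ is [u, v] = uv − (−1)^{ū·v̄} vu. (This expresses that the fake Casimir Ω = 2 Σ_{x∈𝒳} x ⊗ x* super-commutes with the coproduct of every element of p(n).) -/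

import Mathlib

open scoped TensorProduct

/-- Row/column index set `{1,…,n} ∪ {1',…,n'}` for `2n × 2n` matrices:
`.inl i` is the unprimed index `i`, `.inr i` the primed index `i'`. -/
abbrev PIdx (n : ℕ) := Fin n ⊕ Fin n

/-- The space `M_{2n}(ℂ)` of `2n × 2n` complex matrices. -/
abbrev PMat (n : ℕ) := Matrix (PIdx n) (PIdx n) ℂ

/-- Matrix units `E_{rs}`. -/
noncomputable def Eu (n : ℕ) (r s : PIdx n) : PMat n := Matrix.single r s 1

/-- `A⁻_{ij} = E_{ij} − E_{j'i'}`. -/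
noncomputable def Am (n : ℕ) (i j : Fin n) : PMat n :=
  Eu n (.inl i) (.inl j) - Eu n (.inr j) (.inr i)

/-- `A⁺_{ij} = E_{ij} + E_{j'i'}`. -/
noncomputable def Ap (n : ℕ) (i j : Fin n) : PMat n :=
  Eu n (.inl i) (.inl j) + Eu n (.inr j) (.inr i)

/-- `B⁺_{ij} = E_{ij'} + E_{ji'}`. -/
noncomputable def Bp (n : ℕ) (i j : Fin n) : PMat n :=
  Eu n (.inl i) (.inr j) + Eu n (.inl j) (.inr i)

/-- `B⁻_{ij} = E_{ij'} − E_{ji'}`. -/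
noncomputable def Bm (n : ℕ) (i j : Fin n) : PMat n :=
  Eu n (.inl i) (.inr j) - Eu n (.inl j) (.inr i)

/-- `C⁺_{ij} = E_{i'j} + E_{j'i}`. -/
noncomputable def Cp (n : ℕ) (i j : Fin n) : PMat n :=
  Eu n (.inr i) (.inl j) + Eu n (.inr j) (.inl i)

/-- `C⁻_{ij} = E_{i'j} − E_{j'i}`. -/
noncomputable def Cm (n : ℕ) (i j : Fin n) : PMat n :=
  Eu n (.inr i) (.inl j) - Eu n (.inr j) (.inl i)

/-- The periplectic Lie superalgebra `p(n) ⊆ M_{2n}(ℂ)`, i.e. all block matrices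
`(A B; C −Aᵀ)` with `Bᵀ = B` and `Cᵀ = −C`, as a `ℂ`-subspace of `M_{2n}(ℂ)`. -/
noncomputable def pAlg (n : ℕ) : Submodule ℂ (PMat n) where
  carrier := {x | (∀ i j, x (.inr i) (.inr j) = -x (.inl j) (.inl i)) ∧
                  (∀ i j, x (.inl i) (.inr j) = x (.inl j) (.inr i)) ∧
                  (∀ i j, x (.inr i) (.inl j) = -x (.inr j) (.inl i))}
  add_mem' := by
    rintro x y ⟨hx1, hx2, hx3⟩ ⟨hy1, hy2, hy3⟩
    refine ⟨fun i j => ?_, fun i j => ?_, fun i j => ?_⟩ <;>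
      simp only [Matrix.add_apply, hx1 i j, hx2 i j, hx3 i j, hy1 i j, hy2 i j, hy3 i j] <;>
      ring
  zero_mem' := by
    refine ⟨fun i j => ?_, fun i j => ?_, fun i j => ?_⟩ <;> simp
  smul_mem' := by
    rintro c x ⟨hx1, hx2, hx3⟩
    refine ⟨fun i j => ?_, fun i j => ?_, fun i j => ?_⟩ <;>
      simp only [Matrix.smul_apply, hx1 i j, hx2 i j, hx3 i j, smul_eq_mul] <;> ring

/-- Index set for the basis `𝒳` of `p(n)`: pairs `(i,j)` for the `A⁻_{ij}`,
pairs `i ≤ j` for the `B⁺_{ij}`, and pairs `i < j` for the `C⁻_{ij}`. -/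
abbrev PBIdx (n : ℕ) :=
  (Fin n × Fin n) ⊕ ({p : Fin n × Fin n // p.1 ≤ p.2} ⊕ {p : Fin n × Fin n // p.1 < p.2})

/-- The family `𝒳 = {A⁻_{ij}} ∪ {B⁺_{ij} : i ≤ j} ∪ {C⁻_{ij} : i < j}`. -/
noncomputable def Xfam (n : ℕ) : PBIdx n → PMat n
  | .inl p => Am n p.1 p.2
  | .inr (.inl p) => Bp n p.1.1 p.1.2
  | .inr (.inr p) => Cm n p.1.1 p.1.2

/-- The dual family `𝒳*`. -/
noncomputable def XDual (n : ℕ) : PBIdx n → PMat n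
  | .inl p => (1 / 2 : ℂ) • Ap n p.2 p.1
  | .inr (.inl p) =>
      if p.1.1 = p.1.2 then (-(1 / 4 : ℂ)) • Cp n p.1.2 p.1.1
      else (-(1 / 2 : ℂ)) • Cp n p.1.2 p.1.1
  | .inr (.inr p) => (1 / 2 : ℂ) • Bm n p.1.2 p.1.1

/-- The parity of the basis element `x ∈ 𝒳`: the `A⁻_{ij}` are even, the `B⁺_{ij}` and
`C⁻_{ij}` are odd. -/
def parX {n : ℕ} : PBIdx n → ℕ
  | .inl _ => 0
  | .inr _ => 1

/-- The superbracket `[u,v] = uv − (−1)^{ū·v̄} vu` of homogeneous matrices of parities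
`pu`, `pv`. -/
noncomputable def sbr (n : ℕ) (pu pv : ℕ) (u v : PMat n) : PMat n :=
  u * v - ((-1 : ℂ) ^ (pu * pv)) • (v * u)

/-- `x` is homogeneous of parity `p`. -/
def IsHomog {n : ℕ} (x : PMat n) (p : ℕ) : Prop :=
  (p = 0 ∧ ∀ i j, x (.inl i) (.inr j) = 0 ∧ x (.inr i) (.inl j) = 0) ∨
  (p = 1 ∧ ∀ i j, x (.inl i) (.inl j) = 0 ∧ x (.inr i) (.inr j) = 0)

set_option linter.unusedSectionVars false
lemma tmul_entry (n : ℕ) (a m : PMat n) (i j k l : PIdx n) :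
    ((matrixEquivTensor (PIdx n) ℂ (PMat n)).symm (a ⊗ₜ[ℂ] m)) i j k l = m i j * a k l := by
  show (MatrixEquivTensor.toFunAlgHom (PIdx n) ℂ (PMat n) (a ⊗ₜ[ℂ] m)) i j k l = _
  rw [MatrixEquivTensor.toFunAlgHom_apply]
  simp [Matrix.smul_apply, Algebra.algebraMap_eq_smul_one, mul_comm]

section

variable {V : Type*} [AddCommMonoid V] [Module ℂ V] {n : ℕ}

lemma swap_sum (f : Fin n × Fin n → V) (hsym : ∀ p : Fin n × Fin n, f p.swap = f p) :
    ∑ p ∈ Finset.univ.filter (fun p : Fin n × Fin n => p.2 < p.1), f p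
      = ∑ p ∈ Finset.univ.filter (fun p : Fin n × Fin n => p.1 < p.2), f p := by
  refine Finset.sum_nbij' (fun p => p.swap) (fun p => p.swap) ?_ ?_ ?_ ?_ ?_ <;>
    simp_all [Prod.swap]

lemma univ_split (f : Fin n × Fin n → V) (hsym : ∀ p : Fin n × Fin n, f p.swap = f p) :
    ∑ p : Fin n × Fin n, f p
      = ∑ p ∈ Finset.univ.filter (fun p : Fin n × Fin n => p.1 = p.2), f p
        + (∑ p ∈ Finset.univ.filter (fun p : Fin n × Fin n => p.1 < p.2), f p
          + ∑ p ∈ Finset.univ.filter (fun p : Fin n × Fin n => p.1 < p.2), f p) := by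
  nth_rewrite 1 [← Finset.sum_filter_add_sum_filter_not Finset.univ (fun p : Fin n × Fin n => p.1 ≤ p.2) f]
  rw [← Finset.sum_filter_add_sum_filter_not (Finset.univ.filter (fun p : Fin n × Fin n => p.1 ≤ p.2)) (fun p => p.1 = p.2) f]
  rw [Finset.filter_filter, Finset.filter_filter]
  have e1 : (Finset.univ.filter fun p : Fin n × Fin n => p.1 ≤ p.2 ∧ p.1 = p.2)
      = Finset.univ.filter fun p : Fin n × Fin n => p.1 = p.2 := by
    apply Finset.filter_congr; rintro ⟨a,b⟩ _; simp (config := {contextual := true}) [le_of_eq]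
  have e2 : (Finset.univ.filter fun p : Fin n × Fin n => p.1 ≤ p.2 ∧ ¬ p.1 = p.2)
      = Finset.univ.filter fun p : Fin n × Fin n => p.1 < p.2 := by
    apply Finset.filter_congr; rintro ⟨a,b⟩ _; simp [lt_iff_le_and_ne, Ne, eq_comm, and_comm]
  have e3 : (Finset.univ.filter fun p : Fin n × Fin n => ¬ p.1 ≤ p.2)
      = Finset.univ.filter fun p : Fin n × Fin n => p.2 < p.1 := by
    apply Finset.filter_congr; rintro ⟨a,b⟩ _; simp [not_le]
  rw [e1, e2, e3, swap_sum f hsym]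
  abel

lemma sum_subtype_le (f : Fin n × Fin n → V) (hsym : ∀ p : Fin n × Fin n, f p.swap = f p) :
    (∑ p : {p : Fin n × Fin n // p.1 ≤ p.2},
      (if p.1.1 = p.1.2 then (2⁻¹ : ℂ) • f p.1 else f p.1))
      = (2⁻¹ : ℂ) • ∑ p : Fin n × Fin n, f p := by
  rw [← Finset.sum_subtype (Finset.univ.filter (fun p : Fin n × Fin n => p.1 ≤ p.2))
    (by simp) (fun p => if p.1 = p.2 then (2⁻¹ : ℂ) • f p else f p)]
  rw [← Finset.sum_filter_add_sum_filter_not (Finset.univ.filter (fun p : Fin n × Fin n => p.1 ≤ p.2)) (fun p => p.1 = p.2)]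
  rw [Finset.filter_filter, Finset.filter_filter]
  have e1 : (Finset.univ.filter fun p : Fin n × Fin n => p.1 ≤ p.2 ∧ p.1 = p.2)
      = Finset.univ.filter fun p : Fin n × Fin n => p.1 = p.2 := by
    apply Finset.filter_congr; rintro ⟨a,b⟩ _; simp (config := {contextual := true}) [le_of_eq]
  have e2 : (Finset.univ.filter fun p : Fin n × Fin n => p.1 ≤ p.2 ∧ ¬ p.1 = p.2)
      = Finset.univ.filter fun p : Fin n × Fin n => p.1 < p.2 := by
    apply Finset.filter_congr; rintro ⟨a,b⟩ _; simp [lt_iff_le_and_ne, Ne, eq_comm, and_comm]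
  rw [e1, e2]
  rw [Finset.sum_congr rfl (fun p hp => if_pos (Finset.mem_filter.mp hp).2)]
  rw [Finset.sum_congr rfl (g := f)
    (fun p hp => if_neg (ne_of_lt (Finset.mem_filter.mp hp).2))]
  rw [univ_split f hsym, smul_add, smul_add, ← Finset.smul_sum, ← add_smul]
  norm_num

lemma sum_subtype_lt (f : Fin n × Fin n → V) (hsym : ∀ p : Fin n × Fin n, f p.swap = f p)
    (hdiag : ∀ i, f (i, i) = 0) :
    (∑ p : {p : Fin n × Fin n // p.1 < p.2}, f p.1)
      = (2⁻¹ : ℂ) • ∑ p : Fin n × Fin n, f p := by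
  rw [← Finset.sum_subtype (Finset.univ.filter (fun p : Fin n × Fin n => p.1 < p.2))
    (by simp) f]
  rw [univ_split f hsym]
  have : ∑ p ∈ Finset.univ.filter (fun p : Fin n × Fin n => p.1 = p.2), f p = 0 := by
    apply Finset.sum_eq_zero; rintro ⟨a,b⟩ hp
    have : a = b := by simpa using hp
    subst this; exact hdiag a
  rw [this, zero_add, smul_add, ← add_smul]
  norm_num

end

noncomputable def gA (n q : ℕ) (y : PMat n) (p : Fin n × Fin n) : PMat n ⊗[ℂ] PMat n :=
  sbr n q 0 y (Am n p.1 p.2) ⊗ₜ[ℂ] ((1 / 2 : ℂ) • Ap n p.2 p.1)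
    + ((-1 : ℂ) ^ (q * 0)) • (Am n p.1 p.2 ⊗ₜ[ℂ] sbr n q 0 y ((1 / 2 : ℂ) • Ap n p.2 p.1))

noncomputable def gB (n q : ℕ) (y : PMat n) (p : Fin n × Fin n) : PMat n ⊗[ℂ] PMat n :=
  sbr n q 1 y (Bp n p.1 p.2) ⊗ₜ[ℂ] ((-(1 / 2) : ℂ) • Cp n p.2 p.1)
    + ((-1 : ℂ) ^ (q * 1)) • (Bp n p.1 p.2 ⊗ₜ[ℂ] sbr n q 1 y ((-(1 / 2) : ℂ) • Cp n p.2 p.1))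

noncomputable def gC (n q : ℕ) (y : PMat n) (p : Fin n × Fin n) : PMat n ⊗[ℂ] PMat n :=
  sbr n q 1 y (Cm n p.1 p.2) ⊗ₜ[ℂ] ((1 / 2 : ℂ) • Bm n p.2 p.1)
    + ((-1 : ℂ) ^ (q * 1)) • (Cm n p.1 p.2 ⊗ₜ[ℂ] sbr n q 1 y ((1 / 2 : ℂ) • Bm n p.2 p.1))

noncomputable def Gterm (n q : ℕ) (y : PMat n) (p : Fin n × Fin n) : PMat n ⊗[ℂ] PMat n :=
  gA n q y p + ((2⁻¹ : ℂ) • gB n q y p + (2⁻¹ : ℂ) • gC n q y p)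

lemma sbr_smul (n a b : ℕ) (u v : PMat n) (c : ℂ) :
    sbr n a b u (c • v) = c • sbr n a b u v := by
  simp only [sbr, mul_smul_comm, smul_mul_assoc, smul_sub, smul_smul, mul_comm]

lemma sbr_neg_right (n a b : ℕ) (u v : PMat n) :
    sbr n a b u (-v) = -sbr n a b u v := by
  simp only [sbr, mul_neg, neg_mul, smul_neg, neg_sub_neg]
  abel

lemma sbr_zero_right (n a b : ℕ) (u : PMat n) : sbr n a b u 0 = 0 := by
  simp [sbr]

lemma Gentry (n q : ℕ) (y : PMat n) (p : Fin n × Fin n) (i j k l : PIdx n) :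
    ((matrixEquivTensor (PIdx n) ℂ (PMat n)).symm (Gterm n q y p)) i j k l =
      ((1/2 : ℂ) • Ap n p.2 p.1) i j * (sbr n q 0 y (Am n p.1 p.2)) k l
      + (-1 : ℂ)^(q*0) * ((sbr n q 0 y ((1/2 : ℂ) • Ap n p.2 p.1)) i j * (Am n p.1 p.2) k l)
      + 2⁻¹ * (((-(1/2) : ℂ) • Cp n p.2 p.1) i j * (sbr n q 1 y (Bp n p.1 p.2)) k l
        + (-1 : ℂ)^(q*1) * ((sbr n q 1 y ((-(1/2) : ℂ) • Cp n p.2 p.1)) i j * (Bp n p.1 p.2) k l))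
      + 2⁻¹ * (((1/2 : ℂ) • Bm n p.2 p.1) i j * (sbr n q 1 y (Cm n p.1 p.2)) k l
        + (-1 : ℂ)^(q*1) * ((sbr n q 1 y ((1/2 : ℂ) • Bm n p.2 p.1)) i j * (Cm n p.1 p.2) k l)) := by
  simp only [Gterm, gA, gB, gC, map_add, map_smul, tmul_entry, Matrix.add_apply,
    Matrix.smul_apply, smul_eq_mul]
  try ring

lemma Eu_apply (n : ℕ) (r s a b : PIdx n) :
    Eu n r s a b = if a = r ∧ b = s then 1 else 0 := by
  simp [Eu, Matrix.single, eq_comm, and_comm]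

lemma mulE (n : ℕ) (M : PMat n) (r s a b : PIdx n) :
    (M * Eu n r s) a b = if b = s then M a r else 0 := by
  simp only [Eu, Matrix.mul_apply, Matrix.single, Matrix.of_apply, mul_ite, mul_one,
    mul_zero]
  rw [Finset.sum_eq_single r] <;> aesop

lemma Emul (n : ℕ) (M : PMat n) (r s a b : PIdx n) :
    (Eu n r s * M) a b = if a = r then M s b else 0 := by
  simp only [Eu, Matrix.mul_apply, Matrix.single, Matrix.of_apply, ite_mul, one_mul,
    zero_mul]
  rw [Finset.sum_eq_single s] <;> aesop


lemma sum_ite_indep {α : Type*} [Fintype α] (P : Prop) [Decidable P] (f : α → ℂ) :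
    (∑ a : α, if P then f a else 0) = if P then (∑ a : α, f a) else 0 := by
  split_ifs <;> simp

set_option maxHeartbeats 2000000 in
lemma key0 (n : ℕ) (y : PMat n)
    (h1 : ∀ i j, y (.inr i) (.inr j) = -y (.inl j) (.inl i))
    (hm1 : ∀ i j, y (.inl i) (.inr j) = 0)
    (hm2 : ∀ i j, y (.inr i) (.inl j) = 0) :
    ∑ p : Fin n × Fin n, Gterm n 0 y p = 0 := by
  apply (matrixEquivTensor (PIdx n) ℂ (PMat n)).symm.injective
  rw [map_sum, map_zero]
  ext i j k l
  simp only [Matrix.sum_apply, Matrix.zero_apply, Gentry]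
  rcases i with i | i <;> rcases j with j | j <;> rcases k with k | k <;> rcases l with l | l
  all_goals simp only [sbr, Am, Ap, Bp, Bm, Cp, Cm, mul_sub, sub_mul, mul_add, add_mul,
      mul_smul_comm, smul_mul_assoc, Matrix.sub_apply, Matrix.add_apply, Matrix.smul_apply,
      mulE, Emul, Eu_apply, smul_eq_mul, pow_zero, pow_one, mul_zero, mul_one, pow_mul,
      Sum.inl.injEq, Sum.inr.injEq, reduceCtorEq, if_false, if_true, and_true, true_and,
      and_false, false_and, ite_mul, mul_ite, zero_mul, one_mul, ite_and,
      Fintype.sum_prod_type, Finset.sum_ite_eq, Finset.sum_ite_eq', sum_ite_indep,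
      Finset.mem_univ, Finset.sum_add_distrib, Finset.sum_sub_distrib,
      Finset.sum_const_zero, hm1, hm2, h1, Nat.mul_zero, Nat.mul_one]
  all_goals simp only [Finset.sum_add_distrib, Finset.sum_sub_distrib, Finset.sum_ite_eq,
      Finset.sum_ite_eq', sum_ite_indep, Finset.mem_univ, if_true, Finset.sum_const_zero,
      h1, hm1, hm2,
      mul_zero, zero_mul, neg_zero, add_zero, zero_add, sub_zero, zero_sub, mul_neg, neg_neg]
  all_goals (try (split_ifs <;> subst_vars) <;>
      simp [Finset.sum_add_distrib, Finset.sum_sub_distrib, Finset.sum_ite_eq, sum_ite_indep,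
        Finset.sum_ite_eq', h1, hm1, hm2, ite_self] <;>
      try (split_ifs <;> subst_vars) <;>
      try ring)
  all_goals try simp_all [sum_ite_indep, Finset.sum_ite_eq, Finset.sum_ite_eq',
    Finset.sum_add_distrib, Finset.sum_sub_distrib, ite_self]
  all_goals try ring
  all_goals try (split_ifs <;> subst_vars <;> simp_all <;> try ring)

set_option maxHeartbeats 2000000 in
lemma key1 (n : ℕ) (y : PMat n)
    (h2 : ∀ i j, y (.inl i) (.inr j) = y (.inl j) (.inr i))
    (h3 : ∀ i j, y (.inr i) (.inl j) = -y (.inr j) (.inl i))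
    (hm1 : ∀ i j, y (.inl i) (.inl j) = 0)
    (hm2 : ∀ i j, y (.inr i) (.inr j) = 0) :
    ∑ p : Fin n × Fin n, Gterm n 1 y p = 0 := by
  apply (matrixEquivTensor (PIdx n) ℂ (PMat n)).symm.injective
  rw [map_sum, map_zero]
  ext i j k l
  simp only [Matrix.sum_apply, Matrix.zero_apply, Gentry]
  rcases i with i | i <;> rcases j with j | j <;> rcases k with k | k <;> rcases l with l | l
  all_goals simp only [sbr, Am, Ap, Bp, Bm, Cp, Cm, mul_sub, sub_mul, mul_add, add_mul,
      mul_smul_comm, smul_mul_assoc, Matrix.sub_apply, Matrix.add_apply, Matrix.smul_apply,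
      mulE, Emul, Eu_apply, smul_eq_mul, pow_zero, pow_one, mul_zero, mul_one, pow_mul,
      Sum.inl.injEq, Sum.inr.injEq, reduceCtorEq, if_false, if_true, and_true, true_and,
      and_false, false_and, ite_mul, mul_ite, zero_mul, one_mul, ite_and,
      Fintype.sum_prod_type, Finset.sum_ite_eq, Finset.sum_ite_eq', sum_ite_indep,
      Finset.mem_univ, Finset.sum_add_distrib, Finset.sum_sub_distrib,
      Finset.sum_const_zero, hm1, hm2, Nat.mul_zero, Nat.mul_one]
  all_goals simp only [Finset.sum_add_distrib, Finset.sum_sub_distrib, Finset.sum_ite_eq,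
      Finset.sum_ite_eq', sum_ite_indep, Finset.mem_univ, if_true, Finset.sum_const_zero,
      hm1, hm2,
      mul_zero, zero_mul, neg_zero, add_zero, zero_add, sub_zero, zero_sub, mul_neg, neg_neg]
  all_goals (try (split_ifs <;> subst_vars) <;>
      simp [Finset.sum_add_distrib, Finset.sum_sub_distrib, Finset.sum_ite_eq, sum_ite_indep,
        Finset.sum_ite_eq', hm1, hm2, ite_self] <;>
      try (split_ifs <;> subst_vars) <;>
      try ring)
  all_goals try simp_all [-h2, -h3, sum_ite_indep, Finset.sum_ite_eq, Finset.sum_ite_eq',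
    Finset.sum_add_distrib, Finset.sum_sub_distrib, ite_self]
  all_goals try ring
  all_goals try (split_ifs <;> subst_vars <;> simp_all [-h2, -h3] <;> try ring)
  all_goals try (rw [h3]; ring)
  all_goals try (rw [h2]; ring)

/-- for every homogeneous `y ∈ p(n)` of parity `q`,
`Σ_{x ∈ 𝒳} ([y,x] ⊗ x* + (−1)^{q·x̄} x ⊗ [y,x*]) = 0` in `M_{2n}(ℂ) ⊗ M_{2n}(ℂ)`;
i.e. the fake Casimir `Ω = 2 Σ_{x∈𝒳} x ⊗ x*` supercommutes with the coproduct of `y`. -/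
theorem statement4 (n : ℕ) (hn : 1 ≤ n) (y : PMat n) (hy : y ∈ pAlg n) (q : ℕ)
    (hq : IsHomog y q) :
    ∑ t : PBIdx n,
        (sbr n q (parX t) y (Xfam n t) ⊗ₜ[ℂ] XDual n t
          + ((-1 : ℂ) ^ (q * parX t)) • (Xfam n t ⊗ₜ[ℂ] sbr n q (parX t) y (XDual n t)))
      = (0 : PMat n ⊗[ℂ] PMat n) := by
  obtain ⟨hy1, hy2, hy3⟩ := hy
  have main : ∑ p : Fin n × Fin n, Gterm n q y p = 0 := by
    rcases hq with ⟨rfl, hmix⟩ | ⟨rfl, hdiag⟩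
    · exact key0 n y hy1 (fun i j => (hmix i j).1) (fun i j => (hmix i j).2)
    · exact key1 n y hy2 hy3 (fun i j => (hdiag i j).1) (fun i j => (hdiag i j).2)
  have hsymB : ∀ p : Fin n × Fin n, gB n q y p.swap = gB n q y p := by
    rintro ⟨a, b⟩
    simp only [gB, Prod.swap_prod_mk]
    rw [show Bp n b a = Bp n a b from by unfold Bp; rw [add_comm],
        show Cp n a b = Cp n b a from by unfold Cp; rw [add_comm]]
  have hsymC : ∀ p : Fin n × Fin n, gC n q y p.swap = gC n q y p := by
    rintro ⟨a, b⟩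
    simp only [gC, Prod.swap_prod_mk]
    rw [show Cm n b a = -Cm n a b from by unfold Cm; rw [neg_sub],
        show Bm n a b = -Bm n b a from by unfold Bm; rw [neg_sub]]
    simp [sbr_neg_right, smul_neg, neg_smul, neg_neg, TensorProduct.neg_tmul,
      TensorProduct.tmul_neg]
  have hdiagC : ∀ i : Fin n, gC n q y (i, i) = 0 := by
    intro i
    simp [gC, show Cm n i i = 0 from by simp [Cm], show Bm n i i = 0 from by simp [Bm],
      sbr_zero_right]
  have e1 : ∀ p : {p : Fin n × Fin n // p.1 ≤ p.2},
      (sbr n q (parX (Sum.inr (Sum.inl p) : PBIdx n)) y (Xfam n (Sum.inr (Sum.inl p)))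
          ⊗ₜ[ℂ] XDual n (Sum.inr (Sum.inl p))
        + ((-1 : ℂ) ^ (q * parX (Sum.inr (Sum.inl p) : PBIdx n))) •
            (Xfam n (Sum.inr (Sum.inl p)) ⊗ₜ[ℂ]
              sbr n q (parX (Sum.inr (Sum.inl p) : PBIdx n)) y (XDual n (Sum.inr (Sum.inl p)))))
      = if p.1.1 = p.1.2 then (2⁻¹ : ℂ) • gB n q y p.1 else gB n q y p.1 := by
    intro p
    by_cases h : p.1.1 = p.1.2
    · rw [if_pos h]
      simp only [Xfam, XDual, parX, if_pos h, gB]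
      rw [show (-(1/4 : ℂ)) = (2⁻¹ : ℂ) * (-(1/2 : ℂ)) from by norm_num, ← smul_smul,
        sbr_smul]
      simp only [TensorProduct.tmul_smul]
      module
    · rw [if_neg h]
      simp only [Xfam, XDual, parX, if_neg h, gB]
  have hB : (∑ p : {p : Fin n × Fin n // p.1 ≤ p.2},
      (sbr n q (parX (Sum.inr (Sum.inl p) : PBIdx n)) y (Xfam n (Sum.inr (Sum.inl p)))
          ⊗ₜ[ℂ] XDual n (Sum.inr (Sum.inl p))
        + ((-1 : ℂ) ^ (q * parX (Sum.inr (Sum.inl p) : PBIdx n))) •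
            (Xfam n (Sum.inr (Sum.inl p)) ⊗ₜ[ℂ]
              sbr n q (parX (Sum.inr (Sum.inl p) : PBIdx n)) y (XDual n (Sum.inr (Sum.inl p))))))
      = (2⁻¹ : ℂ) • ∑ p : Fin n × Fin n, gB n q y p := by
    rw [Finset.sum_congr rfl (fun p _ => e1 p)]
    exact sum_subtype_le (gB n q y) hsymB
  have hC : (∑ p : {p : Fin n × Fin n // p.1 < p.2},
      (sbr n q (parX (Sum.inr (Sum.inr p) : PBIdx n)) y (Xfam n (Sum.inr (Sum.inr p)))
          ⊗ₜ[ℂ] XDual n (Sum.inr (Sum.inr p))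
        + ((-1 : ℂ) ^ (q * parX (Sum.inr (Sum.inr p) : PBIdx n))) •
            (Xfam n (Sum.inr (Sum.inr p)) ⊗ₜ[ℂ]
              sbr n q (parX (Sum.inr (Sum.inr p) : PBIdx n)) y (XDual n (Sum.inr (Sum.inr p))))))
      = (2⁻¹ : ℂ) • ∑ p : Fin n × Fin n, gC n q y p := by
    rw [Finset.sum_congr rfl (fun p _ => rfl)]
    exact sum_subtype_lt (gC n q y) hsymC hdiagC
  rw [Fintype.sum_sum_type, Fintype.sum_sum_type, hB, hC]
  have expand : (∑ p : Fin n × Fin n,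
      (sbr n q (parX (Sum.inl p : PBIdx n)) y (Xfam n (Sum.inl p)) ⊗ₜ[ℂ] XDual n (Sum.inl p)
        + ((-1 : ℂ) ^ (q * parX (Sum.inl p : PBIdx n))) •
            (Xfam n (Sum.inl p) ⊗ₜ[ℂ]
              sbr n q (parX (Sum.inl p : PBIdx n)) y (XDual n (Sum.inl p)))))
      + ((2⁻¹ : ℂ) • ∑ p : Fin n × Fin n, gB n q y p
        + (2⁻¹ : ℂ) • ∑ p : Fin n × Fin n, gC n q y p)
      = ∑ p : Fin n × Fin n, Gterm n q y p := by
    rw [Finset.smul_sum, Finset.smul_sum, ← Finset.sum_add_distrib, ← Finset.sum_add_distrib]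
    exact Finset.sum_congr rfl (fun p _ => rfl)
  rw [expand, main]
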